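/- For every k ≥ 0, the set X_k \ X_{k+1} contains exactly one periodic orbit of f_α, and this orbit has period 2^k. Moreover any point x of this orbit satisfies f_α^i(x) = f_{α,k}^i(x) for all i ≥ 0. -/

import Mathlib

noncomputable def kfin (α : ℝ) {k : ℕ} (u : Fin k → Bool) : ℝ :=
  (1 - α) * ∑ i : Fin k, (if u i then α ^ (i : ℕ) else 0)

noncomputable def fDel (α : ℝ) (x : ℝ) : ℝ :=
  if x = 1 then 0
  else
    let j := sInf {n : ℕ | x < 1 - α ^ n}
    if x ≤ 1 - α ^ (j - 1) + α ^ j then x - 1 + 2 * α ^ (j - 1) - α ^ j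
    else (1 - α + α ^ 2) / (2 * α - 1) * (x - 1) + α ^ (j + 1) * (2 - α) / (2 * α - 1)

/-- The `k`-th approximation `f_{α,k}`: equal to `f_α` on `[0, 1-α^{k-1}+α^k]`, equal to
`x - 1 + α^k` on `[1-α^k, 1]`, and linear in between; `f_{α,0} = id`. -/
noncomputable def fDelk (α : ℝ) (k : ℕ) (x : ℝ) : ℝ :=
  if k = 0 then x
  else if x ≤ 1 - α ^ (k - 1) + α ^ k then fDel α x
  else if 1 - α ^ k ≤ x then x - 1 + α ^ k
  else fDel α (1 - α ^ (k - 1) + α ^ k) +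
    (x - (1 - α ^ (k - 1) + α ^ k)) / ((1 - α ^ k) - (1 - α ^ (k - 1) + α ^ k)) *
      (0 - fDel α (1 - α ^ (k - 1) + α ^ k))

/-- `X_k = ∪_{u∈Σ^k} I(u)`. -/
def Xk (α : ℝ) (k : ℕ) : Set ℝ :=
  ⋃ u : Fin k → Bool, Set.Icc (kfin α u) (kfin α u + α ^ k)

set_option linter.unusedSectionVars false

section
variable {α : ℝ} (hα1 : 0 < α) (hα2 : α < 1 / 2)

include hα1 hα2

lemma alt1 : α < 1 := by linarith

lemma sInf_eq_succ {x : ℝ} (n : ℕ) (h1 : 1 - α ^ n ≤ x) (h2 : x < 1 - α ^ (n + 1)) :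
    sInf {m : ℕ | x < 1 - α ^ m} = n + 1 := by
  apply le_antisymm
  · exact Nat.sInf_le h2
  · by_contra h
    push_neg at h
    have h' : sInf {m : ℕ | x < 1 - α ^ m} ≤ n := Nat.lt_succ_iff.mp h
    have hmem : sInf {m : ℕ | x < 1 - α ^ m} ∈ {m : ℕ | x < 1 - α ^ m} :=
      Nat.sInf_mem ⟨n + 1, h2⟩
    have : α ^ n ≤ α ^ (sInf {m : ℕ | x < 1 - α ^ m}) :=
      pow_le_pow_of_le_one hα1.le (by linarith) h'
    have : x < 1 - α ^ n := lt_of_lt_of_le hmem (by linarith)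
    linarith

lemma fDel_branch1 {x : ℝ} (n : ℕ) (h1 : 1 - α ^ n ≤ x) (hb : x ≤ 1 - α ^ n + α ^ (n + 1)) :
    fDel α x = x - 1 + 2 * α ^ n - α ^ (n + 1) := by
  have hp : (0:ℝ) < α ^ n := pow_pos hα1 n
  have hps : α ^ (n+1) = α ^ n * α := pow_succ α n
  have h2 : x < 1 - α ^ (n + 1) := by nlinarith
  have hx1 : x ≠ 1 := by nlinarith
  rw [fDel, if_neg hx1]
  simp only [sInf_eq_succ hα1 hα2 n h1 h2, Nat.add_sub_cancel]
  rw [if_pos hb]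

lemma fDel_branch2 {x : ℝ} (n : ℕ) (hb : 1 - α ^ n + α ^ (n + 1) < x) (h2 : x < 1 - α ^ (n + 1)) :
    fDel α x = (1 - α + α ^ 2) / (2 * α - 1) * (x - 1)
      + α ^ (n + 1 + 1) * (2 - α) / (2 * α - 1) := by
  have hp : (0:ℝ) < α ^ (n+1) := pow_pos hα1 (n+1)
  have h1 : 1 - α ^ n ≤ x := by nlinarith
  have hx1 : x ≠ 1 := by nlinarith
  rw [fDel, if_neg hx1]
  simp only [sInf_eq_succ hα1 hα2 n h1 h2, Nat.add_sub_cancel]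
  rw [if_neg (by linarith)]

lemma fDel_one : fDel α 1 = 0 := by simp [fDel]

/-- obtain branch data for x ∈ [0,1) -/
lemma jspec {x : ℝ} (h0 : 0 ≤ x) (h1 : x < 1) :
    ∃ n : ℕ, 1 - α ^ n ≤ x ∧ x < 1 - α ^ (n + 1) := by
  have hne : {m : ℕ | x < 1 - α ^ m}.Nonempty := by
    obtain ⟨n, hn⟩ := exists_pow_lt_of_lt_one (by linarith : (0:ℝ) < 1 - x) (alt1 hα1 hα2)
    exact ⟨n, by simp only [Set.mem_setOf_eq]; linarith⟩
  set m := sInf {m : ℕ | x < 1 - α ^ m} with hm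
  have hmem : m ∈ {m : ℕ | x < 1 - α ^ m} := Nat.sInf_mem hne
  have hm0 : m ≠ 0 := by
    intro h
    rw [h] at hmem
    simp at hmem
    linarith
  obtain ⟨n, hn⟩ := Nat.exists_eq_succ_of_ne_zero hm0
  rw [hn] at hmem
  refine ⟨n, ?_, hmem⟩
  have := Nat.notMem_of_lt_sInf (show n < sInf {m : ℕ | x < 1 - α ^ m} by omega)
  simp only [Set.mem_setOf_eq, not_lt] at this
  linarith


noncomputable def xst (α : ℝ) : ℝ := (1 - α ^ 2) / (2 - α)

lemma xst_gt : α < xst α := by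
  rw [xst, lt_div_iff₀ (by linarith)]
  nlinarith

lemma xst_lt : xst α < 1 - α := by
  rw [xst, div_lt_iff₀ (by linarith)]
  nlinarith

lemma xst_pos : 0 < xst α := lt_trans hα1 (xst_gt hα1 hα2)

lemma xst_lt_one : xst α < 1 := by
  have := xst_lt hα1 hα2; linarith

lemma fDel_low {x : ℝ} (h0 : 0 ≤ x) (h1 : x ≤ α) : fDel α x = x + 1 - α := by
  rw [fDel_branch1 hα1 hα2 0 (by simpa using h0) (by simpa using h1)]
  norm_num
  ring

lemma fDel_mid {x : ℝ} (h0 : α < x) (h1 : x < 1 - α) :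
    fDel α x = (1 - α + α ^ 2) / (2 * α - 1) * (x - 1) + α ^ 2 * (2 - α) / (2 * α - 1) := by
  have := fDel_branch2 hα1 hα2 0 (by simpa using h0) (by simpa using h1)
  rw [this]

lemma fDel_xst : fDel α (xst α) = xst α := by
  rw [fDel_mid hα1 hα2 (xst_gt hα1 hα2) (xst_lt hα1 hα2), xst]
  have h1 : (2:ℝ) * α - 1 ≠ 0 := by intro h; nlinarith
  have h2 : (2:ℝ) - α ≠ 0 := by intro h; nlinarith
  rw [div_mul_eq_mul_div, ← add_div, div_eq_iff h1]
  field_simp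
  ring

lemma fDel_mem {x : ℝ} (hx : x ∈ Set.Icc (0:ℝ) 1) : fDel α x ∈ Set.Icc (0:ℝ) 1 := by
  obtain ⟨h0, h1⟩ := hx
  rcases eq_or_lt_of_le h1 with h | h
  · rw [h, fDel_one hα1 hα2]; exact ⟨le_refl 0, by norm_num⟩
  obtain ⟨n, hn1, hn2⟩ := jspec hα1 hα2 h0 h
  have hp : (0:ℝ) < α ^ n := pow_pos hα1 n
  have hp1 : α ^ (n+1) = α ^ n * α := pow_succ α n
  have hple : α ^ n ≤ 1 := pow_le_one₀ hα1.le (by linarith)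
  by_cases hb : x ≤ 1 - α ^ n + α ^ (n + 1)
  · rw [fDel_branch1 hα1 hα2 n hn1 hb]
    constructor <;> nlinarith
  · push_neg at hb
    rw [fDel_branch2 hα1 hα2 n hb hn2]
    have hd : (2:ℝ) * α - 1 < 0 := by linarith
    have hp2 : α ^ (n+1+1) = α ^ n * α * α := by rw [pow_succ, pow_succ]
    rw [div_mul_eq_mul_div, ← add_div]
    constructor
    · rw [div_nonneg_iff]
      have hA : (0:ℝ) < 1 - α + α ^ 2 := by nlinarith
      refine Or.inr ⟨?_, hd.le⟩
      have step1 : (1 - α + α ^ 2) * (x - 1) ≤ (1 - α + α ^ 2) * (-α ^ (n+1)) :=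
        mul_le_mul_of_nonneg_left (by linarith) hA.le
      have key : (1 - α + α ^ 2) * (-α ^ (n+1)) + α ^ (n+1+1) * (2 - α)
          = -(α ^ n * α) * ((1 - α) * (1 - 2 * α)) := by rw [hp1, hp2]; ring
      have pos : 0 < (α ^ n * α) * ((1 - α) * (1 - 2 * α)) :=
        mul_pos (mul_pos hp hα1) (mul_pos (by linarith) (by linarith))
      linarith
    · rw [div_le_one_iff]
      refine Or.inr (Or.inr ⟨hd, by nlinarith⟩)

lemma fDel_scale {x : ℝ} (h0 : 0 ≤ x) (h1 : x ≤ 1) :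
    fDel α (1 - α + α * x) = α * fDel α x := by
  rcases eq_or_lt_of_le h1 with h | h
  · rw [h]
    have : 1 - α + α * 1 = 1 := by ring
    rw [this, fDel_one hα1 hα2, mul_zero]
  obtain ⟨n, hn1, hn2⟩ := jspec hα1 hα2 h0 h
  have e1 : 1 - α ^ (n+1) ≤ 1 - α + α * x := by
    nlinarith [mul_le_mul_of_nonneg_left hn1 hα1.le, pow_succ α n]
  have e2 : 1 - α + α * x < 1 - α ^ (n+1+1) := by
    nlinarith [mul_lt_mul_of_pos_left hn2 hα1, pow_succ α (n+1)]
  by_cases hb : x ≤ 1 - α ^ n + α ^ (n + 1)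
  · have hb' : 1 - α + α * x ≤ 1 - α ^ (n+1) + α ^ (n+1+1) := by
      nlinarith [mul_le_mul_of_nonneg_left hb hα1.le, pow_succ α n, pow_succ α (n+1)]
    rw [fDel_branch1 hα1 hα2 (n+1) e1 hb', fDel_branch1 hα1 hα2 n hn1 hb]
    simp only [pow_succ]
    ring
  · push_neg at hb
    have hb' : 1 - α ^ (n+1) + α ^ (n+1+1) < 1 - α + α * x := by
      nlinarith [mul_lt_mul_of_pos_left hb hα1, pow_succ α n, pow_succ α (n+1)]
    rw [fDel_branch2 hα1 hα2 (n+1) hb' e2, fDel_branch2 hα1 hα2 n hb hn2]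
    simp only [pow_succ]
    ring


lemma fDel_scale_pow (k : ℕ) {x : ℝ} (h0 : 0 ≤ x) (h1 : x ≤ 1) :
    fDel α (1 - α ^ k + α ^ k * x) = α ^ k * fDel α x := by
  induction k with
  | zero => norm_num
  | succ k ih =>
    have hpk : (0:ℝ) < α ^ k := pow_pos hα1 k
    have hpk1 : α ^ k ≤ 1 := pow_le_one₀ hα1.le (by linarith)
    have harg : 1 - α ^ (k+1) + α ^ (k+1) * x = 1 - α + α * (1 - α ^ k + α ^ k * x) := by
      simp only [pow_succ]; ring
    have ht0 : 0 ≤ 1 - α ^ k + α ^ k * x := by nlinarith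
    have ht1 : 1 - α ^ k + α ^ k * x ≤ 1 := by nlinarith
    rw [harg, fDel_scale hα1 hα2 ht0 ht1, ih, pow_succ]
    ring

lemma fDel_iter_two {x : ℝ} (h0 : 0 ≤ x) (h1 : x ≤ 1) :
    fDel α (fDel α (α * x)) = α * fDel α x := by
  have h : fDel α (α * x) = 1 - α + α * x := by
    rw [fDel_low hα1 hα2 (by positivity) (by nlinarith)]; ring
  rw [h, fDel_scale hα1 hα2 h0 h1]

lemma fDel_iter_mem (m : ℕ) {x : ℝ} (hx : x ∈ Set.Icc (0:ℝ) 1) :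
    (fDel α)^[m] x ∈ Set.Icc (0:ℝ) 1 := by
  induction m with
  | zero => simpa using hx
  | succ m ih => rw [Function.iterate_succ_apply']; exact fDel_mem hα1 hα2 ih

lemma iter2 (m : ℕ) {x : ℝ} (hx : x ∈ Set.Icc (0:ℝ) 1) :
    (fDel α)^[2*m] (α * x) = α * (fDel α)^[m] x := by
  induction m with
  | zero => simp
  | succ m ih =>
    have h2 : 2*(m+1) = 2 + 2*m := by ring
    rw [h2, Function.iterate_add_apply, ih]
    have hmem := fDel_iter_mem hα1 hα2 m hx
    show fDel α (fDel α (α * (fDel α)^[m] x)) = _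
    rw [fDel_iter_two hα1 hα2 hmem.1 hmem.2, Function.iterate_succ_apply']

/-! kfin lemmas -/

lemma kfin_nonneg {k : ℕ} (u : Fin k → Bool) : 0 ≤ kfin α u := by
  apply mul_nonneg (by linarith)
  apply Finset.sum_nonneg
  intro i _
  by_cases h : u i <;> simp [h, pow_nonneg hα1.le]

lemma kfin_le {k : ℕ} (u : Fin k → Bool) : kfin α u ≤ 1 - α ^ k := by
  have h1 : kfin α u ≤ (1 - α) * ∑ i : Fin k, α ^ (i : ℕ) := by
    apply mul_le_mul_of_nonneg_left _ (by linarith)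
    apply Finset.sum_le_sum
    intro i _
    by_cases h : u i <;> simp [h, pow_nonneg hα1.le]
  have h2 : (1 - α) * ∑ i : Fin k, α ^ (i : ℕ) = 1 - α ^ k := by
    rw [Fin.sum_univ_eq_sum_range (fun i => α ^ i) k, geom_sum_eq (by intro h; rw[h] at hα2; norm_num at hα2 : α ≠ 1)]
    have : α - 1 ≠ 0 := by intro h; nlinarith
    field_simp
    ring
  linarith

lemma kfin_cons {k : ℕ} (b : Bool) (u : Fin k → Bool) :
    kfin α (Fin.cons b u) = (if b then 1 - α else 0) + α * kfin α u := by
  rw [kfin, Fin.sum_univ_succ]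
  simp only [Fin.cons_zero, Fin.cons_succ, pow_zero]
  rw [kfin]
  have : ∑ i : Fin k, (if u i then α ^ ((i.succ : Fin (k+1)) : ℕ) else 0)
      = α * ∑ i : Fin k, (if u i then α ^ (i : ℕ) else 0) := by
    rw [Finset.mul_sum]
    apply Finset.sum_congr rfl
    intro i _
    by_cases h : u i <;> simp [h, Fin.val_succ, pow_succ] <;> ring
  rw [this]
  by_cases h : b <;> simp [h] <;> ring

lemma kfin_snoc {k : ℕ} (u : Fin k → Bool) (b : Bool) :
    kfin α (Fin.snoc u b) = kfin α u + (if b then (1 - α) * α ^ k else 0) := by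
  rw [kfin, Fin.sum_univ_castSucc]
  simp only [Fin.snoc_castSucc, Fin.snoc_last, Fin.val_last]
  rw [kfin]
  by_cases h : b <;> simp [h, Fin.coe_castSucc] <;> ring

lemma kfin_single_le {k : ℕ} (u : Fin k → Bool) (j : Fin k) (hj : u j = true) :
    (1 - α) * α ^ (j : ℕ) ≤ kfin α u := by
  apply mul_le_mul_of_nonneg_left _ (by linarith)
  have := Finset.single_le_sum (f := fun i : Fin k => if u i then α ^ (i:ℕ) else 0)
    (fun i _ => by by_cases h : u i <;> simp [h, pow_nonneg hα1.le])
    (Finset.mem_univ j)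
  simpa [hj] using this

/-! Xk lemmas -/

lemma Xk_zero : Xk α 0 = Set.Icc (0:ℝ) 1 := by
  ext x
  simp only [Xk, Set.mem_iUnion]
  constructor
  · rintro ⟨u, hu⟩
    simpa [kfin] using hu
  · intro hx
    exact ⟨Fin.elim0, by simpa [kfin] using hx⟩

lemma Xk_subset {k : ℕ} : Xk α k ⊆ Set.Icc (0:ℝ) 1 := by
  intro x hx
  simp only [Xk, Set.mem_iUnion] at hx
  obtain ⟨u, h1, h2⟩ := hx
  have := kfin_nonneg hα1 hα2 u
  have := kfin_le hα1 hα2 u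
  have : (0:ℝ) < α ^ k := pow_pos hα1 k
  constructor <;> linarith

lemma Xk_succ_iff {k : ℕ} {x : ℝ} :
    x ∈ Xk α (k+1) ↔ ∃ t ∈ Xk α k, x = α * t ∨ x = 1 - α + α * t := by
  simp only [Xk, Set.mem_iUnion]
  constructor
  · rintro ⟨u, h1, h2⟩
    have hu : u = Fin.cons (u 0) (Fin.tail u) := (Fin.cons_self_tail u).symm
    rw [hu, kfin_cons hα1 hα2] at h1 h2
    set v := Fin.tail u with hv
    set c : ℝ := if u 0 then 1 - α else 0 with hc
    refine ⟨(x - c) / α, ⟨v, ?_, ?_⟩, ?_⟩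
    · rw [le_div_iff₀ hα1]; linarith [pow_succ α k]
    · rw [div_le_iff₀ hα1]; linarith [pow_succ α k]
    · have : α * ((x - c) / α) = x - c := by field_simp
      by_cases h : u 0
      · right; rw [this]; simp [hc, h]
      · left; rw [this]; simp [hc, h]
  · rintro ⟨t, ⟨v, h1, h2⟩, hx | hx⟩ <;> subst hx
    · refine ⟨Fin.cons false v, ?_, ?_⟩ <;> rw [kfin_cons hα1 hα2] <;> norm_num <;>
        nlinarith [mul_le_mul_of_nonneg_left h1 hα1.le, mul_le_mul_of_nonneg_left h2 hα1.le,
          pow_succ α k]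
    · refine ⟨Fin.cons true v, ?_, ?_⟩ <;> rw [kfin_cons hα1 hα2] <;> norm_num <;>
        nlinarith [mul_le_mul_of_nonneg_left h1 hα1.le, mul_le_mul_of_nonneg_left h2 hα1.le,
          pow_succ α k]

lemma scale_mem {k : ℕ} {t : ℝ} (ht : t ∈ Xk α k) : α * t ∈ Xk α (k+1) :=
  (Xk_succ_iff hα1 hα2).mpr ⟨t, ht, Or.inl rfl⟩

lemma shift_mem {k : ℕ} {t : ℝ} (ht : t ∈ Xk α k) : 1 - α + α * t ∈ Xk α (k+1) :=
  (Xk_succ_iff hα1 hα2).mpr ⟨t, ht, Or.inr rfl⟩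

lemma Xk_anti {k : ℕ} : Xk α (k+1) ⊆ Xk α k := by
  intro x hx
  simp only [Xk, Set.mem_iUnion] at hx ⊢
  obtain ⟨u, h1, h2⟩ := hx
  have hu : u = Fin.snoc (Fin.init u) (u (Fin.last k)) := (Fin.snoc_init_self u).symm
  rw [hu, kfin_snoc hα1 hα2] at h1 h2
  refine ⟨Fin.init u, ?_, ?_⟩
  · have : (0:ℝ) ≤ if u (Fin.last k) then (1 - α) * α ^ k else 0 := by
      by_cases h : u (Fin.last k)
      · simp only [h, if_true]
        exact mul_nonneg (by linarith) (pow_nonneg hα1.le k)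
      · simp [h]
    linarith
  · have hpk : (0:ℝ) < α ^ k := pow_pos hα1 k
    by_cases h : u (Fin.last k) <;> simp only [h] at h2 <;> rw [pow_succ] at h2 <;> simp at h2 <;>
      nlinarith

lemma Xk_inv {k : ℕ} {x : ℝ} (hx : x ∈ Xk α k) : fDel α x ∈ Xk α k := by
  induction k generalizing x with
  | zero => rw [Xk_zero hα1 hα2] at *; exact fDel_mem hα1 hα2 hx
  | succ k ih =>
    obtain ⟨t, ht, hx | hx⟩ := (Xk_succ_iff hα1 hα2).mp hx
    · have ht01 := Xk_subset hα1 hα2 ht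
      have : fDel α x = 1 - α + α * t := by
        rw [hx, fDel_low hα1 hα2 (mul_nonneg hα1.le ht01.1)
          (by nlinarith [mul_le_mul_of_nonneg_left ht01.2 hα1.le])]; ring
      rw [this]; exact shift_mem hα1 hα2 ht
    · have ht01 := Xk_subset hα1 hα2 ht
      rw [hx, fDel_scale hα1 hα2 ht01.1 ht01.2]
      exact scale_mem hα1 hα2 (ih ht)

lemma Xk_iter_inv {k : ℕ} (m : ℕ) {x : ℝ} (hx : x ∈ Xk α k) : (fDel α)^[m] x ∈ Xk α k := by
  induction m with
  | zero => simpa using hx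
  | succ m ih => rw [Function.iterate_succ_apply']; exact Xk_inv hα1 hα2 ih


/-! orbit lemmas -/

lemma kfin_zero (u : Fin 0 → Bool) : kfin α u = 0 := by simp [kfin]

lemma iter_fix (i : ℕ) : (fDel α)^[i] (xst α) = xst α := by
  induction i with
  | zero => rfl
  | succ i ih => rw [Function.iterate_succ_apply', ih, fDel_xst hα1 hα2]

lemma xst_mem : xst α ∈ Set.Icc (0:ℝ) 1 :=
  ⟨(xst_pos hα1 hα2).le, (xst_lt_one hα1 hα2).le⟩

lemma base_mem (k : ℕ) : α ^ k * xst α ∈ Set.Icc (0:ℝ) 1 := by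
  have h1 : (0:ℝ) < α ^ k := pow_pos hα1 k
  have h2 : α ^ k ≤ 1 := pow_le_one₀ hα1.le (by linarith)
  constructor
  · exact mul_nonneg h1.le (xst_pos hα1 hα2).le
  · nlinarith [xst_lt_one hα1 hα2, xst_pos hα1 hα2]

lemma orbpt_mem {k : ℕ} (u : Fin k → Bool) :
    kfin α u + α ^ k * xst α ∈ Set.Icc (0:ℝ) 1 := by
  have h1 := kfin_nonneg hα1 hα2 u
  have h2 := kfin_le hα1 hα2 u
  have h3 := base_mem hα1 hα2 k
  have h4 : α ^ k * xst α ≤ α ^ k := by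
    nlinarith [pow_pos hα1 k, xst_lt_one hα1 hα2]
  constructor <;> [linarith [h3.1]; linarith]

lemma orbit_mem (k : ℕ) (i : ℕ) :
    ∃ u : Fin k → Bool, (fDel α)^[i] (α ^ k * xst α) = kfin α u + α ^ k * xst α := by
  induction k generalizing i with
  | zero =>
    refine ⟨Fin.elim0, ?_⟩
    rw [kfin_zero hα1 hα2]
    simpa using iter_fix hα1 hα2 i
  | succ k ih =>
    have hbase := base_mem hα1 hα2 k
    have harg : α ^ (k+1) * xst α = α * (α ^ k * xst α) := by rw [pow_succ]; ring
    rcases Nat.even_or_odd i with ⟨m, hm⟩ | ⟨m, hm⟩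
    · obtain ⟨u, hu⟩ := ih m
      refine ⟨Fin.cons false u, ?_⟩
      rw [harg, show i = 2 * m by omega, iter2 hα1 hα2 m hbase, hu, kfin_cons hα1 hα2]
      simp only [Bool.false_eq_true, if_false, zero_add, pow_succ]
      ring
    · obtain ⟨u, hu⟩ := ih m
      refine ⟨Fin.cons true u, ?_⟩
      have h1 : i = 2 * m + 1 := by omega
      rw [harg, h1, Function.iterate_succ_apply', iter2 hα1 hα2 m hbase, hu]
      have hmem := orbpt_mem hα1 hα2 u
      rw [fDel_low hα1 hα2 (mul_nonneg hα1.le hmem.1)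
        (by nlinarith [mul_le_mul_of_nonneg_left hmem.2 hα1.le])]
      rw [kfin_cons hα1 hα2]
      simp only [if_true, pow_succ]
      ring

lemma kfin_all_true {k : ℕ} (u : Fin k → Bool) (h : ∀ j, u j = true) :
    kfin α u = 1 - α ^ k := by
  rw [kfin]
  have : ∀ i : Fin k, (if u i then α ^ (i:ℕ) else 0) = α ^ (i:ℕ) := fun i => by simp [h i]
  rw [Finset.sum_congr rfl (fun i _ => this i),
    Fin.sum_univ_eq_sum_range (fun i => α ^ i) k,
    geom_sum_eq (by intro h'; rw [h'] at hα2; norm_num at hα2 : α ≠ 1)]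
  have : α - 1 ≠ 0 := by intro h'; nlinarith
  field_simp
  ring

lemma kfin_all_false {k : ℕ} (u : Fin k → Bool) (h : ∀ j, u j = false) :
    kfin α u = 0 := by
  rw [kfin]
  have : ∀ i : Fin k, (if u i then α ^ (i:ℕ) else 0) = 0 := fun i => by simp [h i]
  rw [Finset.sum_congr rfl (fun i _ => this i)]
  simp

lemma kfin_le_of_false {k : ℕ} (u : Fin k → Bool) (j : Fin k) (hj : u j = false) :
    kfin α u ≤ 1 - α ^ k - (1 - α) * α ^ (j:ℕ) := by
  have hsum : ∑ i : Fin k, (if u i then α ^ (i:ℕ) else 0) + α ^ (j:ℕ)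
      ≤ ∑ i : Fin k, α ^ (i:ℕ) := by
    have : ∑ i : Fin k, (if u i then α ^ (i:ℕ) else 0) + α ^ (j:ℕ)
        = ∑ i : Fin k, ((if u i then α ^ (i:ℕ) else 0) + (if i = j then α ^ (j:ℕ) else 0)) := by
      rw [Finset.sum_add_distrib, Finset.sum_ite_eq' Finset.univ j (fun _ => α ^ (j:ℕ))]
      simp
    rw [this]
    apply Finset.sum_le_sum
    intro i _
    by_cases h : i = j
    · subst h; simp [hj]
    · simp only [h, if_false, add_zero]
      by_cases h' : u i <;> simp [h', pow_nonneg hα1.le]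
  have hgeom : (1 - α) * ∑ i : Fin k, α ^ (i:ℕ) = 1 - α ^ k := by
    rw [Fin.sum_univ_eq_sum_range (fun i => α ^ i) k,
      geom_sum_eq (by intro h'; rw [h'] at hα2; norm_num at hα2 : α ≠ 1)]
    have : α - 1 ≠ 0 := by intro h'; nlinarith
    field_simp
    ring
  have := mul_le_mul_of_nonneg_left hsum (by linarith : (0:ℝ) ≤ 1 - α)
  rw [mul_add] at this
  rw [kfin]
  linarith

end

section
variable {α : ℝ} (hα1 : 0 < α) (hα2 : α < 1 / 2)
include hα1 hα2

lemma fDelk_eq_on_orbit (k : ℕ) (u : Fin k → Bool) :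
    fDelk α k (kfin α u + α ^ k * xst α) = fDel α (kfin α u + α ^ k * xst α) := by
  rcases Nat.eq_zero_or_pos k with hk | hk
  · subst hk
    rw [kfin_zero hα1 hα2]
    simp only [fDelk, if_pos rfl, pow_zero, one_mul, zero_add]
    exact (fDel_xst hα1 hα2).symm
  obtain ⟨n, rfl⟩ := Nat.exists_eq_succ_of_ne_zero hk.ne'
  set z := kfin α u + α ^ (n+1) * xst α with hz
  have hxst1 := xst_lt_one hα1 hα2
  have hxa := xst_gt hα1 hα2
  have hxb := xst_lt hα1 hα2
  have hpn : (0:ℝ) < α ^ n := pow_pos hα1 n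
  have hps : α ^ (n+1) = α ^ n * α := pow_succ α n
  by_cases hall : ∀ j, u j = true
  · have hk1 : kfin α u = 1 - α ^ (n+1) := kfin_all_true hα1 hα2 u hall
    have hcond : ¬ (z ≤ 1 - α ^ (n+1-1) + α ^ (n+1)) := by
      simp only [Nat.add_sub_cancel]
      rw [hz, hk1]
      nlinarith [mul_pos (pow_pos hα1 (n+1)) (xst_pos hα1 hα2)]
    have hcond2 : 1 - α ^ (n+1) ≤ z := by
      rw [hz, hk1]
      nlinarith [mul_pos (pow_pos hα1 (n+1)) (xst_pos hα1 hα2)]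
    rw [fDelk, if_neg (Nat.succ_ne_zero n), if_neg hcond, if_pos hcond2]
    have : z = 1 - α ^ (n+1) + α ^ (n+1) * xst α := by rw [hz, hk1]
    rw [this, fDel_scale_pow hα1 hα2 (n+1) (xst_pos hα1 hα2).le hxst1.le,
      fDel_xst hα1 hα2]
    simp only [Nat.succ_eq_add_one, pow_succ]
    ring
  · push_neg at hall
    obtain ⟨j, hj⟩ := hall
    have hj' : u j = false := by simpa using hj
    have hb : kfin α u ≤ 1 - α ^ (n+1) - (1 - α) * α ^ (j:ℕ) :=
      kfin_le_of_false hα1 hα2 u j hj'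
    have hjn : (j : ℕ) ≤ n := by omega
    have hpow : α ^ n ≤ α ^ (j:ℕ) := pow_le_pow_of_le_one hα1.le (by linarith) hjn
    have hcond : z ≤ 1 - α ^ (n+1-1) + α ^ (n+1) := by
      simp only [Nat.add_sub_cancel]
      have h1 : (1 - α) * α ^ n ≤ (1 - α) * α ^ (j:ℕ) :=
        mul_le_mul_of_nonneg_left hpow (by linarith)
      have h2 : α ^ (n+1) * xst α < α ^ (n+1) :=
        mul_lt_of_lt_one_right (pow_pos hα1 (n+1)) hxst1
      rw [hz]
      nlinarith [hps]
    rw [fDelk, if_neg (Nat.succ_ne_zero n), if_pos hcond]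

lemma fDelk_orbit_iter (k : ℕ) (i : ℕ) :
    (fDel α)^[i] (α ^ k * xst α) = (fDelk α k)^[i] (α ^ k * xst α) := by
  induction i with
  | zero => rfl
  | succ i ih =>
    obtain ⟨u, hu⟩ := orbit_mem hα1 hα2 k i
    rw [Function.iterate_succ_apply', Function.iterate_succ_apply', ← ih, hu,
      fDelk_eq_on_orbit hα1 hα2 k u]

lemma minper (k : ℕ) : Function.minimalPeriod (fDel α) (α ^ k * xst α) = 2 ^ k := by
  induction k with
  | zero =>
    simp only [pow_zero, one_mul]
    rw [Function.minimalPeriod_eq_one_iff_isFixedPt]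
    exact fDel_xst hα1 hα2
  | succ k ih =>
    set z := α ^ k * xst α with hzdef
    have hz01 := base_mem hα1 hα2 k
    have harg : α ^ (k+1) * xst α = α * z := by rw [hzdef, pow_succ]; ring
    have hzper : Function.IsPeriodicPt (fDel α) (2 ^ k) z := by
      rw [← ih]; exact Function.isPeriodicPt_minimalPeriod _ _
    have hper : Function.IsPeriodicPt (fDel α) (2 ^ (k+1)) (α ^ (k+1) * xst α) := by
      show (fDel α)^[2 ^ (k+1)] _ = _
      rw [harg, show 2 ^ (k+1) = 2 * 2 ^ k from by ring, iter2 hα1 hα2 _ hz01, hzper.eq]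
    have hdvd := hper.minimalPeriod_dvd
    obtain ⟨m, hm, hpm⟩ := (Nat.dvd_prime_pow Nat.prime_two).mp hdvd
    rcases Nat.eq_zero_or_pos m with hm0 | hm0
    · exfalso
      have hfix : fDel α (α ^ (k+1) * xst α) = α ^ (k+1) * xst α := by
        have := Function.isPeriodicPt_minimalPeriod (fDel α) (α ^ (k+1) * xst α)
        rw [hpm, hm0, pow_zero] at this
        simpa using this.eq
      have hle : α ^ (k+1) * xst α ≤ α := by
        have hk1 : α ^ k ≤ 1 := pow_le_one₀ hα1.le (by linarith)
        have h1 : α ^ (k+1) ≤ α := by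
          calc α ^ (k+1) = α ^ k * α := pow_succ α k
          _ ≤ 1 * α := mul_le_mul_of_nonneg_right hk1 hα1.le
          _ = α := one_mul α
        nlinarith [pow_pos hα1 (k+1), xst_lt_one hα1 hα2, xst_pos hα1 hα2]
      rw [fDel_low hα1 hα2 (base_mem hα1 hα2 (k+1)).1 hle] at hfix
      linarith
    · obtain ⟨m', hm'⟩ := Nat.exists_eq_succ_of_ne_zero hm0.ne'
      rw [Nat.succ_eq_add_one] at hm'
      subst hm'
      have hiter : (fDel α)^[2 ^ (m'+1)] (α ^ (k+1) * xst α) = α ^ (k+1) * xst α := by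
        have := (Function.isPeriodicPt_minimalPeriod (fDel α) (α ^ (k+1) * xst α)).eq
        rwa [hpm] at this
      have : α * (fDel α)^[2 ^ m'] z = α * z := by
        calc α * (fDel α)^[2 ^ m'] z
            = (fDel α)^[2 ^ (m'+1)] (α ^ (k+1) * xst α) := by
              rw [harg, show (2:ℕ) ^ (m'+1) = 2 * 2 ^ m' from by ring]
              exact (iter2 hα1 hα2 _ hz01).symm
          _ = α ^ (k+1) * xst α := hiter
          _ = α * z := harg
      have hzm : Function.IsPeriodicPt (fDel α) (2 ^ m') z := by
        have := mul_left_cancel₀ hα1.ne' this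
        exact this
      have hdvd2 : 2 ^ k ∣ 2 ^ m' := by rw [← ih]; exact hzm.minimalPeriod_dvd
      have hkm : k ≤ m' := (Nat.pow_dvd_pow_iff_le_right (by norm_num)).mp hdvd2
      have : m' + 1 = k + 1 := by omega
      rw [hpm, this]



/-! X1 structure -/

lemma kfin_one (u : Fin 1 → Bool) : kfin α u = if u 0 then 1 - α else 0 := by
  rw [kfin, Fin.sum_univ_one]
  by_cases h : u 0 <;> simp [h]

lemma mem_X1_cases {x : ℝ} (hx : x ∈ Xk α 1) : x ≤ α ∨ 1 - α ≤ x := by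
  simp only [Xk, Set.mem_iUnion] at hx
  obtain ⟨u, h1, h2⟩ := hx
  rw [kfin_one hα1 hα2] at h1 h2
  by_cases h : u 0
  · right; simp only [h, if_true] at h1; linarith
  · left; simp only [h, Bool.false_eq_true, if_false] at h2; rw [pow_one] at h2; linarith

lemma mem_X1_of_low {x : ℝ} (h0 : 0 ≤ x) (h1 : x ≤ α) : x ∈ Xk α 1 := by
  simp only [Xk, Set.mem_iUnion]
  exact ⟨fun _ => false, by rw [kfin_one hα1 hα2]; simpa using ⟨h0, by simpa using h1⟩⟩

lemma mem_X1_of_high {x : ℝ} (h0 : 1 - α ≤ x) (h1 : x ≤ 1) : x ∈ Xk α 1 := by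
  simp only [Xk, Set.mem_iUnion]
  refine ⟨fun _ => true, ?_, ?_⟩ <;> rw [kfin_one hα1 hα2] <;> simp <;> linarith

lemma not_mem_X1 {x : ℝ} (hx : x ∈ Set.Icc (0:ℝ) 1) (h : x ∉ Xk α 1) :
    α < x ∧ x < 1 - α := by
  constructor
  · by_contra hc; push_neg at hc; exact h (mem_X1_of_low hα1 hα2 hx.1 hc)
  · by_contra hc; push_neg at hc; exact h (mem_X1_of_high hα1 hα2 hc hx.2)

lemma Xk_sub_one (k : ℕ) : Xk α (k+1) ⊆ Xk α 1 := by
  induction k with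
  | zero => exact subset_rfl
  | succ k ih => exact (Xk_anti hα1 hα2).trans ih

lemma fDel_high_mem {w : ℝ} (h1 : 1 - α ≤ w) (h2 : w ≤ 1) :
    fDel α w ∈ Set.Icc (0:ℝ) α := by
  set t := (w - (1 - α)) / α with ht
  have ht0 : 0 ≤ t := div_nonneg (by linarith) hα1.le
  have ht1 : t ≤ 1 := by rw [ht, div_le_one hα1]; linarith
  have hwt : 1 - α + α * t = w := by rw [ht]; field_simp; ring
  rw [← hwt, fDel_scale hα1 hα2 ht0 ht1]
  have := fDel_mem hα1 hα2 ⟨ht0, ht1⟩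
  exact ⟨mul_nonneg hα1.le this.1, by nlinarith [this.2]⟩

lemma fDel_low_mem {w : ℝ} (h1 : 0 ≤ w) (h2 : w ≤ α) :
    fDel α w ∈ Set.Icc (1 - α) 1 := by
  rw [fDel_low hα1 hα2 h1 h2]
  constructor <;> linarith

lemma alt_par {z : ℝ} (hz : z ∈ Set.Icc (0:ℝ) α) (i : ℕ) :
    (Even i → (fDel α)^[i] z ∈ Set.Icc (0:ℝ) α) ∧
    (Odd i → (fDel α)^[i] z ∈ Set.Icc (1 - α) 1) := by
  induction i with
  | zero =>
    refine ⟨fun _ => by simpa using hz, fun h => absurd h (by simp)⟩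
  | succ i ih =>
    constructor
    · intro hev
      have hodd : Odd i := by
        rcases Nat.even_or_odd i with h | h
        · exact absurd hev (by simp [Nat.even_add_one, h])
        · exact h
      have := ih.2 hodd
      rw [Function.iterate_succ_apply']
      exact fDel_high_mem hα1 hα2 this.1 this.2
    · intro hodd
      have hev : Even i := by
        rcases Nat.even_or_odd i with h | h
        · exact h
        · exact absurd hodd (by simp [Nat.odd_add_one, h])
      have := ih.1 hev
      rw [Function.iterate_succ_apply']
      exact fDel_low_mem hα1 hα2 this.1 this.2

/-! level-0 uniqueness -/

lemma unique0 {y : ℝ} (h1 : α < y) (h2 : y < 1 - α) {p : ℕ} (hp : 0 < p)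
    (hper : Function.IsPeriodicPt (fDel α) p y) : y = xst α := by
  set C : ℝ := (1 - α + α ^ 2) / (2 * α - 1) with hC
  have hy01 : y ∈ Set.Icc (0:ℝ) 1 := ⟨by linarith, by linarith⟩
  have hynot : y ∉ Xk α 1 := by
    intro hmem
    rcases mem_X1_cases hα1 hα2 hmem with h | h <;> linarith
  have horb : ∀ m, α < (fDel α)^[m] y ∧ (fDel α)^[m] y < 1 - α := by
    intro m
    have hm1 := fDel_iter_mem hα1 hα2 m hy01
    have hnot : (fDel α)^[m] y ∉ Xk α 1 := by
      intro hmem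
      apply hynot
      have hNp : m ≤ (m+1) * p := by
        have := Nat.le_mul_of_pos_right (m+1) hp; omega
      have heq : (fDel α)^[(m+1)*p] y = y := (hper.const_mul (m+1)).eq
      have hy' : y = (fDel α)^[(m+1)*p - m] ((fDel α)^[m] y) := by
        rw [← Function.iterate_add_apply, Nat.sub_add_cancel hNp]
        exact heq.symm
      rw [hy']
      exact Xk_iter_inv hα1 hα2 _ hmem
    exact not_mem_X1 hα1 hα2 hm1 hnot
  have hxfix : xst α = C * (xst α - 1) + α ^ 2 * (2 - α) / (2 * α - 1) := by
    conv_lhs => rw [← fDel_xst hα1 hα2]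
    rw [fDel_mid hα1 hα2 (xst_gt hα1 hα2) (xst_lt hα1 hα2)]
  have hrec : ∀ m, (fDel α)^[m] y - xst α = C ^ m * (y - xst α) := by
    intro m
    induction m with
    | zero => simp
    | succ m ih =>
      rw [Function.iterate_succ_apply', fDel_mid hα1 hα2 (horb m).1 (horb m).2]
      rw [pow_succ]
      linear_combination C * ih - hxfix
  by_contra hne
  have hd : 0 < |y - xst α| := by
    rw [abs_pos]; intro h; exact hne (by linarith [sub_eq_zero.mp h])
  have hCneg : C < -1 := by
    rw [hC, div_lt_iff_of_neg (by linarith)]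
    nlinarith
  have hCabs : 1 < |C| := by
    rw [abs_of_neg (by linarith : C < 0)]
    linarith
  obtain ⟨m, hm⟩ := pow_unbounded_of_one_lt (1 / |y - xst α|) hCabs
  have hgt : 1 < |C| ^ m * |y - xst α| := by
    rw [div_lt_iff₀ hd] at hm
    calc (1:ℝ) = 1 / |y - xst α| * |y - xst α| := by field_simp
    _ < |C| ^ m * |y - xst α| := by
        apply mul_lt_mul_of_pos_right _ hd
        rw [div_lt_iff₀ hd] at *
        linarith [hm]
    
  have hdiff : |(fDel α)^[m] y - xst α| ≤ 1 := by
    have h1 := (horb m).1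
    have h2 := (horb m).2
    have h3 := xst_gt hα1 hα2
    have h4 := xst_lt hα1 hα2
    rw [abs_le]
    constructor <;> linarith
  rw [hrec m, abs_mul, abs_pow] at hdiff
  linarith


lemma uniqueness (k : ℕ) : ∀ y, y ∈ Xk α k → y ∉ Xk α (k+1) → ∀ p, 0 < p →
    Function.IsPeriodicPt (fDel α) p y → ∃ i, (fDel α)^[i] (α ^ k * xst α) = y := by
  induction k with
  | zero =>
    intro y hy hyn p hp hper
    have hy01 : y ∈ Set.Icc (0:ℝ) 1 := by rwa [Xk_zero hα1 hα2] at hy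
    obtain ⟨hl, hr⟩ := not_mem_X1 hα1 hα2 hy01 hyn
    exact ⟨0, by simpa using (unique0 hα1 hα2 hl hr hp hper).symm⟩
  | succ k ih =>
    intro y hy hyn p hp hper
    have hy01 : y ∈ Set.Icc (0:ℝ) 1 := Xk_subset hα1 hα2 hy
    have hstay : ∀ i, (fDel α)^[i] y ∈ Xk α (k+1) ∧ (fDel α)^[i] y ∉ Xk α (k+2) := by
      intro i
      refine ⟨Xk_iter_inv hα1 hα2 i hy, fun hmem => hyn ?_⟩
      have hNp : i ≤ (i+1) * p := by
        have := Nat.le_mul_of_pos_right (i+1) hp; omega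
      have heq : (fDel α)^[(i+1)*p] y = y := (hper.const_mul (i+1)).eq
      have hy' : y = (fDel α)^[(i+1)*p - i] ((fDel α)^[i] y) := by
        rw [← Function.iterate_add_apply, Nat.sub_add_cancel hNp]
        exact heq.symm
      rw [hy']
      exact Xk_iter_inv hα1 hα2 _ hmem
    have hy1 : y ∈ Xk α 1 := Xk_sub_one hα1 hα2 k hy
    obtain ⟨z, hzX, hzN, hz0α, hzper, r, hr⟩ :
        ∃ z, z ∈ Xk α (k+1) ∧ z ∉ Xk α (k+2) ∧ z ∈ Set.Icc (0:ℝ) α ∧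
          Function.IsPeriodicPt (fDel α) p z ∧ ∃ r, (fDel α)^[r] z = y := by
      rcases mem_X1_cases hα1 hα2 hy1 with hl | hh
      · exact ⟨y, hy, hyn, ⟨hy01.1, hl⟩, hper, 0, rfl⟩
      · refine ⟨fDel α y, by simpa using (hstay 1).1, by simpa using (hstay 1).2,
          fDel_high_mem hα1 hα2 hh hy01.2, hper.apply, p - 1, ?_⟩
        rw [← Function.iterate_succ_apply, show (p-1).succ = p by omega]
        exact hper.eq
    obtain ⟨q, hpq, hq0⟩ : ∃ q, p = 2 * q ∧ 0 < q := by
      rcases Nat.even_or_odd p with ⟨q, hq⟩ | hodd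
      · exact ⟨q, by omega, by omega⟩
      · exfalso
        have halt := (alt_par hα1 hα2 hz0α p).2 hodd
        rw [hzper.eq] at halt
        have := halt.1
        have := hz0α.2
        linarith
    set w := z / α with hw
    have hzw : z = α * w := by rw [hw]; field_simp
    have hw01 : w ∈ Set.Icc (0:ℝ) 1 :=
      ⟨div_nonneg hz0α.1 hα1.le, (div_le_one hα1).mpr (by linarith [hz0α.2])⟩
    have hwX : w ∈ Xk α k := by
      obtain ⟨t, htX, ht⟩ := (Xk_succ_iff hα1 hα2).mp hzX
      rcases ht with h | h
      · have : w = t := mul_left_cancel₀ hα1.ne' (hzw.symm.trans h)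
        rwa [this]
      · exfalso
        have ht0 : 0 ≤ t := (Xk_subset hα1 hα2 htX).1
        have := hz0α.2
        nlinarith
    have hwN : w ∉ Xk α (k+1) := fun h => hzN (hzw ▸ scale_mem hα1 hα2 h)
    have hwper : Function.IsPeriodicPt (fDel α) q w := by
      show (fDel α)^[q] w = w
      have h2q : (fDel α)^[2*q] (α * w) = α * (fDel α)^[q] w := iter2 hα1 hα2 q hw01
      rw [← hzw, ← hpq] at h2q
      have := h2q.symm.trans (hzper.eq.trans hzw)
      exact mul_left_cancel₀ hα1.ne' this
    obtain ⟨i, hi⟩ := ih w hwX hwN q hq0 hwper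
    refine ⟨r + 2*i, ?_⟩
    rw [Function.iterate_add_apply]
    have h2i : (fDel α)^[2*i] (α ^ (k+1) * xst α) = z := by
      rw [show α ^ (k+1) * xst α = α * (α ^ k * xst α) from by rw [pow_succ]; ring,
        iter2 hα1 hα2 i (base_mem hα1 hα2 k), hi, ← hzw]
    rw [h2i, hr]

lemma xk_mem (k : ℕ) : α ^ k * xst α ∈ Xk α k := by
  simp only [Xk, Set.mem_iUnion]
  refine ⟨fun _ => false, ?_, ?_⟩ <;>
    rw [kfin_all_false hα1 hα2 _ (fun _ => rfl)]
  · exact (base_mem hα1 hα2 k).1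
  · rw [zero_add]
    nlinarith [pow_pos hα1 k, xst_lt_one hα1 hα2]

lemma xk_not_mem (k : ℕ) : α ^ k * xst α ∉ Xk α (k+1) := by
  intro hmem
  simp only [Xk, Set.mem_iUnion] at hmem
  obtain ⟨v, h1, h2⟩ := hmem
  by_cases hall : ∀ j, v j = false
  · rw [kfin_all_false hα1 hα2 v hall, zero_add] at h2
    nlinarith [pow_pos hα1 k, xst_gt hα1 hα2, pow_succ α k]
  · push_neg at hall
    obtain ⟨j, hj⟩ := hall
    have hj' : v j = true := by simpa using hj
    have hlow := kfin_single_le hα1 hα2 v j hj'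
    have hjk : (j : ℕ) ≤ k := by omega
    have hpow : α ^ k ≤ α ^ (j:ℕ) := pow_le_pow_of_le_one hα1.le (by linarith) hjk
    have hkey : α ^ k * xst α < (1 - α) * α ^ k := by
      nlinarith [pow_pos hα1 k, xst_lt hα1 hα2]
    have : (1 - α) * α ^ k ≤ (1 - α) * α ^ (j:ℕ) :=
      mul_le_mul_of_nonneg_left hpow (by linarith)
    linarith

end

/-- `X_k \ X_{k+1}` contains exactly one periodic orbit of `f_α`, of (minimal) period `2^k`,
and along this orbit `f_α` agrees with `f_{α,k}`. -/
theorem stmt9 (α : ℝ) (hα1 : 0 < α) (hα2 : α < 1 / 2) (k : ℕ) :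
    ∃ x ∈ Xk α k \ Xk α (k + 1),
      Function.minimalPeriod (fDel α) x = 2 ^ k ∧
      (∀ i : ℕ, (fDel α)^[i] x = (fDelk α k)^[i] x) ∧
      ∀ y ∈ Xk α k \ Xk α (k + 1),
        (∃ p, 0 < p ∧ Function.IsPeriodicPt (fDel α) p y) →
          ∃ i : ℕ, (fDel α)^[i] x = y := by
  refine ⟨α ^ k * xst α, ⟨xk_mem hα1 hα2 k, xk_not_mem hα1 hα2 k⟩, minper hα1 hα2 k,
    fun i => fDelk_orbit_iter hα1 hα2 k i, ?_⟩
  rintro y ⟨hy, hyn⟩ ⟨p, hp, hper⟩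
  exact uniqueness hα1 hα2 k y hy hyn p hp hper
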